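/- For every partition λ with conjugate λ', one has H(λ) = −G(λ') in the field ℚ(p): that is, Σ_{i=1}^{ℓ(λ)} p^{λ_i−i} + p^{−ℓ(λ)}/(p−1) = −( Σ_{i=1}^{ℓ(λ')} p^{−λ'_i+i−1} + p^{ℓ(λ')}/(1−p) ). (This is the regularized form of the identity s_□(p^{λ+ρ}) = −s_□(p^{−λ'−ρ}), i.e. Σ_{i≥1} p^{λ_i−i+1/2} = −Σ_{i≥1} p^{−λ'_i+i−1/2} after summing the geometric tails as rational functions.) -/
import Mathlib


noncomputable section

/-- The regularized sum G(λ) = Σ_{i=1}^{ℓ} p^{−λ_i+i−1} + p^{ℓ}/(1−p) ∈ ℚ(p),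
the regularization of Σ_{i≥1} p^{−λ_i+i−1}.  Here the parts of λ are
λ_i = colLen (i−1) and ℓ = rowLen 0 is the number of nonzero parts. -/
def Gfun (μ : YoungDiagram) : RatFunc ℚ :=
  (∑ j ∈ Finset.range (μ.rowLen 0), RatFunc.X ^ j * (RatFunc.X ^ μ.colLen j)⁻¹) +
    RatFunc.X ^ μ.rowLen 0 * (1 - RatFunc.X)⁻¹

/-- The regularized sum H(λ) = Σ_{i=1}^{ℓ} p^{λ_i−i} + p^{−ℓ}/(p−1) ∈ ℚ(p),
the regularization of Σ_{i≥1} p^{λ_i−i}. -/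
def Hfun (μ : YoungDiagram) : RatFunc ℚ :=
  (∑ j ∈ Finset.range (μ.rowLen 0), RatFunc.X ^ μ.colLen j * (RatFunc.X ^ (j + 1))⁻¹) +
    (RatFunc.X ^ μ.rowLen 0)⁻¹ * (RatFunc.X - 1)⁻¹

/-- The Young diagram obtained by deleting the first (top) row. -/
def eraseRow (μ : YoungDiagram) : YoungDiagram where
  cells := μ.cells.filterMap (fun c => if c.1 = 0 then none else some (c.1 - 1, c.2))
    (by
      rintro ⟨i, j⟩ ⟨i', j'⟩ ⟨k, l⟩ h h'
      simp only [Option.mem_def] at h h'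
      by_cases h1 : i = 0
      · rw [if_pos h1] at h; exact absurd h (by simp)
      rw [if_neg h1] at h
      by_cases h2 : i' = 0
      · rw [if_pos h2] at h'; exact absurd h' (by simp)
      rw [if_neg h2] at h'
      simp only [Option.some.injEq, Prod.mk.injEq] at h h'
      simp only [Prod.mk.injEq]
      omega)
  isLowerSet := by
    rintro ⟨i, j⟩ ⟨i', j'⟩ ⟨hi, hj⟩ h
    simp only [Finset.mem_coe, Finset.mem_filterMap] at h ⊢
    obtain ⟨⟨k, l⟩, hkl, hf⟩ := h
    by_cases h1 : k = 0
    · simp [h1] at hf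
    rw [if_neg h1] at hf
    simp only [Option.some.injEq, Prod.mk.injEq] at hf
    refine ⟨(i' + 1, j'), ?_, by simp⟩
    have hle : ((i' + 1 : ℕ), j') ≤ (k, l) := by
      constructor
      · simp only at hi ⊢; omega
      · simp only at hj ⊢; omega
    exact Finset.mem_coe.mp (μ.isLowerSet hle (Finset.mem_coe.mpr hkl))

lemma mem_eraseRow {μ : YoungDiagram} {i j : ℕ} :
    (i, j) ∈ eraseRow μ ↔ (i + 1, j) ∈ μ := by
  show (i, j) ∈ (eraseRow μ).cells ↔ (i + 1, j) ∈ μ.cells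
  simp only [eraseRow, Finset.mem_filterMap]
  constructor
  · rintro ⟨⟨k, l⟩, hkl, hf⟩
    by_cases h1 : k = 0
    · simp [h1] at hf
    rw [if_neg h1] at hf
    simp only [Option.some.injEq, Prod.mk.injEq] at hf
    have hk : k = i + 1 := by omega
    rw [hk, hf.2] at hkl
    exact hkl
  · intro h
    exact ⟨(i + 1, j), h, by simp⟩

lemma rowLen_eraseRow (μ : YoungDiagram) (i : ℕ) :
    (eraseRow μ).rowLen i = μ.rowLen (i + 1) := by
  apply eq_of_forall_lt_iff
  intro c
  rw [← YoungDiagram.mem_iff_lt_rowLen, ← YoungDiagram.mem_iff_lt_rowLen, mem_eraseRow]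

lemma colLen_eraseRow (μ : YoungDiagram) (j : ℕ) :
    (eraseRow μ).colLen j = μ.colLen j - 1 := by
  apply eq_of_forall_lt_iff
  intro c
  rw [← YoungDiagram.mem_iff_lt_colLen]
  rw [mem_eraseRow, YoungDiagram.mem_iff_lt_colLen]
  omega

lemma X_sub_one_ne_zero : (RatFunc.X : RatFunc ℚ) - 1 ≠ 0 := by
  have h : (RatFunc.X : RatFunc ℚ) - 1 =
      algebraMap (Polynomial ℚ) (RatFunc ℚ) (Polynomial.X - 1) := by
    rw [map_sub, map_one, RatFunc.algebraMap_X]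
  rw [h]
  apply RatFunc.algebraMap_ne_zero
  intro hc
  have := congrArg (Polynomial.eval 2) hc
  norm_num at this

lemma geom_aux (b a : ℕ) (hba : b ≤ a) :
    ∑ j ∈ Finset.Ico b a, RatFunc.X * ((RatFunc.X : RatFunc ℚ) ^ (j + 1))⁻¹ =
      RatFunc.X * (RatFunc.X ^ b)⁻¹ * (RatFunc.X - 1)⁻¹ - (RatFunc.X ^ a)⁻¹ -
        (RatFunc.X ^ a)⁻¹ * (RatFunc.X - 1)⁻¹ := by
  have hx : (RatFunc.X : RatFunc ℚ) ≠ 0 := RatFunc.X_ne_zero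
  have h1 : (RatFunc.X : RatFunc ℚ) - 1 ≠ 0 := X_sub_one_ne_zero
  induction a, hba using Nat.le_induction with
  | base =>
    rw [Finset.Ico_self, Finset.sum_empty]
    have hv : (RatFunc.X : RatFunc ℚ) ^ b ≠ 0 := pow_ne_zero _ hx
    generalize (RatFunc.X : RatFunc ℚ) ^ b = v at hv ⊢
    field_simp
    ring
  | succ a hba ih =>
    rw [Finset.sum_Ico_succ_top hba, ih, pow_succ, mul_inv]
    have hXX : RatFunc.X * (RatFunc.X : RatFunc ℚ)⁻¹ = 1 := mul_inv_cancel₀ hx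
    have h11 : (RatFunc.X - 1) * ((RatFunc.X : RatFunc ℚ) - 1)⁻¹ = 1 := mul_inv_cancel₀ h1
    linear_combination (((RatFunc.X ^ a)⁻¹ : RatFunc ℚ) +
        (RatFunc.X ^ a)⁻¹ * (RatFunc.X - 1)⁻¹) * hXX -
      (RatFunc.X ^ a)⁻¹ * (RatFunc.X : RatFunc ℚ)⁻¹ * h11

/-- For every partition λ, H(λ) = −G(λ') in ℚ(p), where λ' is the
conjugate (transpose) partition. -/
theorem statement13 (μ : YoungDiagram) : Hfun μ = -Gfun μ.transpose := by
  suffices h : ∀ n (μ : YoungDiagram), μ.colLen 0 = n → Hfun μ = -Gfun μ.transpose from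
    h _ μ rfl
  intro n
  induction n with
  | zero =>
    intro μ h0
    have hr : μ.rowLen 0 = 0 := by
      by_contra hc
      have : (0, 0) ∈ μ := YoungDiagram.mem_iff_lt_rowLen.2 (Nat.pos_of_ne_zero hc)
      rw [YoungDiagram.mem_iff_lt_colLen, h0] at this
      exact absurd this (by omega)
    have hrt : μ.transpose.rowLen 0 = 0 := by rw [YoungDiagram.rowLen_transpose, h0]
    unfold Hfun Gfun
    rw [hr, hrt]
    simp only [Finset.range_zero, Finset.sum_empty, pow_zero, inv_one, one_mul, zero_add]
    rw [show (1 : RatFunc ℚ) - RatFunc.X = -(RatFunc.X - 1) by ring, inv_neg]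
    ring
  | succ n IH =>
    intro μ hc
    set ν := eraseRow μ with hν
    have hνc : ν.colLen 0 = n := by
      rw [hν, colLen_eraseRow, hc]
      omega
    have IHν := IH ν hνc
    set a := μ.rowLen 0 with ha
    set b := ν.rowLen 0 with hb
    have hb1 : b = μ.rowLen 1 := by rw [hb, hν, rowLen_eraseRow]
    have hba : b ≤ a := by rw [hb1, ha]; exact μ.rowLen_anti 0 1 (by omega)
    -- col lengths relation for j < a
    have hcol : ∀ j < a, μ.colLen j = ν.colLen j + 1 := by
      intro j hj
      have hmem : (0, j) ∈ μ := by
        rw [YoungDiagram.mem_iff_lt_rowLen]; exact hj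
      rw [YoungDiagram.mem_iff_lt_colLen] at hmem
      have := colLen_eraseRow μ j
      rw [← hν] at this
      omega
    have hcol0 : ∀ j ∈ Finset.Ico b a, μ.colLen j = 1 := by
      intro j hj
      rw [Finset.mem_Ico] at hj
      have h1 := hcol j hj.2
      have h2 : ν.colLen j = 0 := by
        by_contra hcc
        have : (0, j) ∈ ν := YoungDiagram.mem_iff_lt_colLen.2 (Nat.pos_of_ne_zero hcc)
        rw [YoungDiagram.mem_iff_lt_rowLen, ← hb] at this
        omega
      omega
    -- rewrite Hfun μ
    have hH : Hfun μ =
        RatFunc.X * (∑ j ∈ Finset.range b, RatFunc.X ^ ν.colLen j * (RatFunc.X ^ (j + 1))⁻¹) +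
          (∑ j ∈ Finset.Ico b a, RatFunc.X * ((RatFunc.X : RatFunc ℚ) ^ (j + 1))⁻¹) +
          (RatFunc.X ^ a)⁻¹ * (RatFunc.X - 1)⁻¹ := by
      unfold Hfun
      rw [← ha, Finset.range_eq_Ico, ← Finset.sum_Ico_consecutive _ (Nat.zero_le b) hba,
        ← Finset.range_eq_Ico]
      congr 1
      congr 1
      · rw [Finset.mul_sum]
        apply Finset.sum_congr rfl
        intro j hj
        rw [Finset.mem_range] at hj
        rw [hcol j (lt_of_lt_of_le hj hba), pow_succ]
        ring
      · apply Finset.sum_congr rfl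
        intro j hj
        rw [hcol0 j hj, pow_one]
    -- rewrite Gfun μ.transpose
    have hG : Gfun μ.transpose =
        (RatFunc.X ^ a)⁻¹ +
          RatFunc.X * ((∑ j ∈ Finset.range n, RatFunc.X ^ j * (RatFunc.X ^ ν.rowLen j)⁻¹) +
            RatFunc.X ^ n * (1 - RatFunc.X)⁻¹) := by
      unfold Gfun
      rw [YoungDiagram.rowLen_transpose, hc]
      have hsum : ∑ j ∈ Finset.range (n + 1),
          RatFunc.X ^ j * ((RatFunc.X : RatFunc ℚ) ^ μ.transpose.colLen j)⁻¹ =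
          (RatFunc.X ^ a)⁻¹ +
            RatFunc.X * ∑ j ∈ Finset.range n, RatFunc.X ^ j * (RatFunc.X ^ ν.rowLen j)⁻¹ := by
        rw [Finset.sum_range_succ', add_comm]
        congr 1
        · rw [YoungDiagram.colLen_transpose, ← ha, pow_zero, one_mul]
        · rw [Finset.mul_sum]
          apply Finset.sum_congr rfl
          intro j hj
          rw [YoungDiagram.colLen_transpose, show μ.rowLen (j + 1) = ν.rowLen j by
            rw [hν, rowLen_eraseRow], pow_succ]
          ring
      rw [hsum]
      ring
    -- rewrite IH
    have hIH : (∑ j ∈ Finset.range b,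
          (RatFunc.X : RatFunc ℚ) ^ ν.colLen j * (RatFunc.X ^ (j + 1))⁻¹) +
        (RatFunc.X ^ b)⁻¹ * (RatFunc.X - 1)⁻¹ =
        -((∑ j ∈ Finset.range n, (RatFunc.X : RatFunc ℚ) ^ j * (RatFunc.X ^ ν.rowLen j)⁻¹) +
          RatFunc.X ^ n * (1 - RatFunc.X)⁻¹) := by
      have h := IHν
      unfold Hfun Gfun at h
      rw [YoungDiagram.rowLen_transpose, hνc, ← hb] at h
      convert h using 4
      all_goals rw [YoungDiagram.colLen_transpose]
    have hgeom := geom_aux b a hba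
    rw [hH, hG]
    linear_combination RatFunc.X * hIH + hgeom
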